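/- Let δ ∈ (0, 1/2), p ∈ (0,1), and let n be a positive integer with δn ≥ n^{3/4}. Let G be a simple graph on n vertices equipped with an orientation G⃗ such that: the total number of edges of G is at least (1−δ)n²p/2; for every vertex set B ⊆ V(G) with |B| ≥ δn, e(B) ≤ (1+δ)·C(|B|,2)·p; and for every pair of disjoint vertex sets A, B ⊆ V(G) with |A|, |B| ≥ n^{3/4}, e(A,B) ≤ (1+δ)|A||B|p. Then for every α ∈ [δ, 1−δ] and every β ∈ [0, ((1+δ)/(1+3δ))·(α/2) − δ/((1+3δ)α)] (with αn an integer), there is no set A ⊆ V(G) with |A| ≥ αn such that every vertex v ∈ A has outdegree d⁺(v) < (1+3δ)βnp in G⃗. -/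

import Mathlib

open Filter

/-- The outneighbourhood `N1(v)` of `v` in the digraph with arc relation `D`. -/
def outNbr {V : Type*} (D : V → V → Prop) (v : V) : Set V := {w | w ≠ v ∧ D v w}

/-- The inneighbourhood `N⁻(v)` of `v`. -/
def inNbr {V : Type*} (D : V → V → Prop) (v : V) : Set V := {w | w ≠ v ∧ D w v}

/-- The second outneighbourhood `N2(v)` of `v`. -/
def outNbr2 {V : Type*} (D : V → V → Prop) (v : V) : Set V :=
  {w | w ∉ insert v (outNbr D v) ∧ ∃ u ∈ outNbr D v, D u w}

/-- `v` is a Seymour vertex: `|N2(v)| ≥ |N1(v)|`. -/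
def SeymourVertex {V : Type*} (D : V → V → Prop) (v : V) : Prop :=
  (outNbr D v).ncard ≤ (outNbr2 D v).ncard

/-- `v` is a Sullivan vertex: `|N2(v)| ≥ |N⁻(v)|`. -/
def SullivanVertex {V : Type*} (D : V → V → Prop) (v : V) : Prop :=
  (inNbr D v).ncard ≤ (outNbr2 D v).ncard

/-- An oriented graph: an asymmetric (hence irreflexive and loopless) arc relation. -/
def OrientedGraph {V : Type*} (D : V → V → Prop) : Prop := ∀ u v, D u v → ¬ D v u

/-- `D` is an orientation of the simple graph `G`. -/
def Orients {V : Type*} (D : V → V → Prop) (G : SimpleGraph V) : Prop :=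
  OrientedGraph D ∧ ∀ u v, G.Adj u v ↔ (D u v ∨ D v u)

/-- Strong connectivity of a digraph: every vertex reaches every other by a directed path. -/
def StrongConn {V : Type*} (D : V → V → Prop) : Prop := ∀ u v, Relation.ReflTransGen D u v

/-- The number of edges of `G` with one endpoint in `A` and the other in `B`
(counted via ordered pairs; equals `e(A,B)` for disjoint `A`, `B`). -/
noncomputable def eBtw {V : Type*} (G : SimpleGraph V) (A B : Set V) : ℕ :=
  {p : V × V | p.1 ∈ A ∧ p.2 ∈ B ∧ G.Adj p.1 p.2}.ncard

/-- The number of edges of `G` with both endpoints in `A`. -/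
noncomputable def eIn {V : Type*} (G : SimpleGraph V) (A : Set V) : ℕ :=
  {e | e ∈ G.edgeSet ∧ ∀ v ∈ e, v ∈ A}.ncard

open scoped Classical in
/-- The probability that the binomial random graph `G(n,p)` satisfies the property `P`. -/
noncomputable def gnpProb (n : ℕ) (p : ℝ) (P : SimpleGraph (Fin n) → Prop) : ℝ :=
  ∑ G : SimpleGraph (Fin n),
    if P G then p ^ G.edgeSet.ncard * (1 - p) ^ (n.choose 2 - G.edgeSet.ncard) else 0

lemma count_split {n : ℕ} (G : SimpleGraph (Fin n)) (A : Set (Fin n)) :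
    G.edgeSet.ncard ≤ eIn G A + eIn G Aᶜ + eBtw G A Aᶜ := by
  classical
  set P : Set (Fin n × Fin n) := {p | p.1 ∈ A ∧ p.2 ∈ Aᶜ ∧ G.Adj p.1 p.2} with hP
  set E1 : Set (Sym2 (Fin n)) := {e | e ∈ G.edgeSet ∧ ∀ v ∈ e, v ∈ A} with hE1
  set E2 : Set (Sym2 (Fin n)) := {e | e ∈ G.edgeSet ∧ ∀ v ∈ e, v ∈ Aᶜ} with hE2
  have hsub : G.edgeSet ⊆ (E1 ∪ E2) ∪ (Function.uncurry Sym2.mk '' P) := by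
    intro e he
    induction e using Sym2.ind with
    | _ u v =>
      have hadj : G.Adj u v := he
      by_cases hu : u ∈ A <;> by_cases hv : v ∈ A
      · left; left
        refine ⟨he, fun w hw => ?_⟩
        rw [Sym2.mem_iff] at hw; rcases hw with rfl | rfl <;> assumption
      · right; exact ⟨(u, v), ⟨hu, hv, hadj⟩, rfl⟩
      · right; exact ⟨(v, u), ⟨hv, hu, hadj.symm⟩, Sym2.eq_swap⟩
      · left; right
        refine ⟨he, fun w hw => ?_⟩
        rw [Sym2.mem_iff] at hw; rcases hw with rfl | rfl <;> assumption
  have h1 : G.edgeSet.ncard ≤ ((E1 ∪ E2) ∪ Function.uncurry Sym2.mk '' P).ncard :=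
    Set.ncard_le_ncard hsub (Set.toFinite _)
  have h2 : ((E1 ∪ E2) ∪ Function.uncurry Sym2.mk '' P).ncard ≤ (E1 ∪ E2).ncard + (Function.uncurry Sym2.mk '' P).ncard :=
    Set.ncard_union_le _ _
  have h3 : (E1 ∪ E2).ncard ≤ E1.ncard + E2.ncard := Set.ncard_union_le _ _
  have h4 : (Function.uncurry Sym2.mk '' P).ncard ≤ P.ncard := Set.ncard_image_le (Set.toFinite _)
  have hE1' : eIn G A = E1.ncard := rfl
  have hE2' : eIn G Aᶜ = E2.ncard := rfl
  have hP' : eBtw G A Aᶜ = P.ncard := rfl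
  omega

lemma eIn_le_sum_outdeg {n : ℕ} (G : SimpleGraph (Fin n)) (D : Fin n → Fin n → Prop)
    (hD : Orients D G) (A : Set (Fin n)) :
    eIn G A ≤ ∑ v ∈ A.toFinite.toFinset, (outNbr D v).ncard := by
  classical
  set F : Finset (Fin n × Fin n) := A.toFinite.toFinset.biUnion
      (fun v => ((outNbr D v).toFinite.toFinset).image (fun w => (v, w))) with hF
  have hmem : ∀ u v : Fin n, u ∈ A → v ∈ outNbr D u → (u, v) ∈ F := by
    intro u v hu hv
    rw [hF, Finset.mem_biUnion]
    exact ⟨u, (Set.Finite.mem_toFinset _).mpr hu,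
      Finset.mem_image.mpr ⟨v, (Set.Finite.mem_toFinset _).mpr hv, rfl⟩⟩
  have hsub : {e | e ∈ G.edgeSet ∧ ∀ v ∈ e, v ∈ A} ⊆ Function.uncurry Sym2.mk '' (↑F : Set (Fin n × Fin n)) := by
    intro e he
    induction e using Sym2.ind with
    | _ u v =>
      obtain ⟨hadj, hall⟩ := he
      have hadj' : G.Adj u v := hadj
      have hu : u ∈ A := hall u (Sym2.mem_mk_left u v)
      have hv : v ∈ A := hall v (Sym2.mem_mk_right u v)
      rcases (hD.2 u v).mp hadj' with h | h
      · exact ⟨(u, v), hmem u v hu ⟨hadj'.ne', h⟩, rfl⟩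
      · exact ⟨(v, u), hmem v u hv ⟨hadj'.ne, h⟩, Sym2.eq_swap⟩
  calc eIn G A ≤ (Function.uncurry Sym2.mk '' (↑F : Set (Fin n × Fin n))).ncard :=
        Set.ncard_le_ncard hsub (Set.toFinite _)
    _ ≤ (↑F : Set (Fin n × Fin n)).ncard := Set.ncard_image_le (Set.toFinite _)
    _ = F.card := Set.ncard_coe_finset F
    _ ≤ ∑ v ∈ A.toFinite.toFinset,
          (((outNbr D v).toFinite.toFinset).image (fun w => (v, w))).card :=
        Finset.card_biUnion_le
    _ ≤ ∑ v ∈ A.toFinite.toFinset, (outNbr D v).ncard := by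
        refine Finset.sum_le_sum fun v _ => ?_
        refine le_trans Finset.card_image_le ?_
        rw [Set.ncard_eq_toFinset_card (outNbr D v) (Set.toFinite _)]

set_option maxHeartbeats 1000000 in
/-- under the stated edge-count conditions on the oriented `n`-vertex graph
(with `δn ≥ n^{3/4}`), for all admissible `α` and `β` (with `αn ∈ ℕ`) there is no set `A`
of at least `αn` vertices all of whose vertices have outdegree less than `(1+3δ)βnp`. -/
theorem stmt_19 (δ : ℝ) (hδ0 : 0 < δ) (hδ1 : δ < 1/2)
    (p : ℝ) (hp0 : 0 < p) (hp1 : p < 1)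
    (n : ℕ) (hn0 : 0 < n) (hn : (n : ℝ) ^ ((3 : ℝ)/4) ≤ δ * n)
    (G : SimpleGraph (Fin n)) (D : Fin n → Fin n → Prop) (hD : Orients D G)
    (htot : (1 - δ) * n^2 * p / 2 ≤ (G.edgeSet.ncard : ℝ))
    (hin : ∀ B : Set (Fin n), δ * n ≤ (B.ncard : ℝ) →
      (eIn G B : ℝ) ≤ (1 + δ) * (Nat.choose B.ncard 2 : ℝ) * p)
    (hAB : ∀ A B : Set (Fin n), Disjoint A B → (n : ℝ) ^ ((3 : ℝ)/4) ≤ (A.ncard : ℝ) →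
      (n : ℝ) ^ ((3 : ℝ)/4) ≤ (B.ncard : ℝ) →
      (eBtw G A B : ℝ) ≤ (1 + δ) * A.ncard * B.ncard * p) :
    ∀ α β : ℝ, α ∈ Set.Icc δ (1 - δ) →
      β ∈ Set.Icc (0 : ℝ) ((1 + δ)/(1 + 3*δ) * (α/2) - δ/((1 + 3*δ) * α)) →
      (∃ m : ℕ, (m : ℝ) = α * n) →
      ¬ ∃ A : Set (Fin n), α * n ≤ (A.ncard : ℝ) ∧
        ∀ v ∈ A, ((outNbr D v).ncard : ℝ) < (1 + 3*δ) * β * n * p := by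
  intro α β hα hβ hmex
  rintro ⟨A0, hA0card, hA0out⟩
  obtain ⟨hD1, hD2⟩ := hD
  obtain ⟨m, hm⟩ := hmex
  have hN0 : (0 : ℝ) < n := by exact_mod_cast hn0
  have hα0 : 0 < α := lt_of_lt_of_le hδ0 hα.1
  have hα1 : α ≤ 1 - δ := hα.2
  -- m ≤ A0.ncard
  have hmA0 : m ≤ A0.ncard := by
    have : (m : ℝ) ≤ (A0.ncard : ℝ) := by rw [hm]; exact hA0card
    exact_mod_cast this
  obtain ⟨A, hAsub, hAcard⟩ := Set.exists_subset_card_eq hmA0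
  have ha : (A.ncard : ℝ) = α * n := by rw [hAcard, hm]
  have hmn : m ≤ n := by
    have : (m : ℝ) ≤ (n : ℝ) := by
      rw [hm]
      nlinarith
    exact_mod_cast this
  have hm1 : 1 ≤ m := by
    by_contra h
    have hm0 : m = 0 := by omega
    have : (0 : ℝ) < α * n := by positivity
    rw [← hm, hm0] at this; simp at this
  -- complement cardinality
  have hk : Aᶜ.ncard = n - m := by
    have h := Set.ncard_add_ncard_compl A
    rw [hAcard] at h
    simp [Nat.card_eq_fintype_card] at h
    omega
  have hkR : ((Aᶜ.ncard : ℕ) : ℝ) = (n : ℝ) - m := by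
    rw [hk]; push_cast [Nat.cast_sub hmn]; ring
  have hδn : δ * n ≤ (m : ℝ) := by rw [hm]; nlinarith [hα.1]
  have hδk : δ * n ≤ (n : ℝ) - m := by rw [hm]; nlinarith
  have hn34 : (n : ℝ) ^ ((3:ℝ)/4) ≤ δ * n := hn
  -- apply hin to Aᶜ
  have hinc : (eIn G Aᶜ : ℝ) ≤ (1 + δ) * (Nat.choose Aᶜ.ncard 2 : ℝ) * p := by
    apply hin; rw [hkR]; exact hδk
  -- choose bound
  have hchoose : ((Nat.choose Aᶜ.ncard 2 : ℕ) : ℝ) ≤ ((n : ℝ) - m)^2 / 2 := by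
    have h2 : 2 * Nat.choose Aᶜ.ncard 2 ≤ Aᶜ.ncard * Aᶜ.ncard := by
      rw [Nat.choose_two_right, mul_comm]
      calc Aᶜ.ncard * (Aᶜ.ncard - 1) / 2 * 2 ≤ Aᶜ.ncard * (Aᶜ.ncard - 1) :=
            Nat.div_mul_le_self _ _
        _ ≤ Aᶜ.ncard * Aᶜ.ncard := Nat.mul_le_mul_left _ (Nat.sub_le _ _)
    have h2R : 2 * ((Nat.choose Aᶜ.ncard 2 : ℕ) : ℝ) ≤ ((Aᶜ.ncard : ℕ) : ℝ) * ((Aᶜ.ncard : ℕ) : ℝ) := by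
      exact_mod_cast h2
    rw [hkR] at h2R
    nlinarith
  have hinc2 : (eIn G Aᶜ : ℝ) ≤ (1 + δ) * (((n : ℝ) - m)^2 / 2) * p := by
    calc (eIn G Aᶜ : ℝ) ≤ (1 + δ) * (Nat.choose Aᶜ.ncard 2 : ℝ) * p := hinc
      _ ≤ (1 + δ) * (((n : ℝ) - m)^2 / 2) * p := by
          apply mul_le_mul_of_nonneg_right _ (le_of_lt hp0)
          apply mul_le_mul_of_nonneg_left hchoose (by linarith)
  -- apply hAB
  have hbtw : (eBtw G A Aᶜ : ℝ) ≤ (1 + δ) * (m : ℝ) * ((n : ℝ) - m) * p := by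
    have h := hAB A Aᶜ disjoint_compl_right
      (by rw [hAcard]; exact le_trans hn34 hδn)
      (by rw [hkR]; exact le_trans hn34 hδk)
    rw [hAcard, hkR] at h
    exact h
  -- count split
  have hsplit : (G.edgeSet.ncard : ℝ) ≤ (eIn G A : ℝ) + (eIn G Aᶜ : ℝ) + (eBtw G A Aᶜ : ℝ) := by
    exact_mod_cast count_split G A
  -- outdegree bound
  have hsum : (eIn G A : ℝ) < (m : ℝ) * ((1 + 3*δ) * β * n * p) := by
    have h0 : (eIn G A : ℝ) ≤ ((∑ v ∈ A.toFinite.toFinset, (outNbr D v).ncard : ℕ) : ℝ) := by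
      exact_mod_cast eIn_le_sum_outdeg G D ⟨hD1, hD2⟩ A
    have hne : (A.toFinite.toFinset).Nonempty := by
      rw [← Finset.card_pos, ← Set.ncard_eq_toFinset_card A (Set.toFinite A), hAcard]
      omega
    have hlt : (∑ v ∈ A.toFinite.toFinset, ((outNbr D v).ncard : ℝ)) <
        ∑ _v ∈ A.toFinite.toFinset, ((1 + 3*δ) * β * n * p) := by
      refine Finset.sum_lt_sum_of_nonempty hne fun v hv => ?_
      exact hA0out v (hAsub ((Set.Finite.mem_toFinset _).mp hv))
    rw [Finset.sum_const, nsmul_eq_mul, ← Set.ncard_eq_toFinset_card A (Set.toFinite A),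
      hAcard] at hlt
    push_cast at h0
    linarith
  -- beta bound
  have h3δ : (0 : ℝ) < 1 + 3*δ := by linarith
  have hq : (1 + 3*δ) * β * α ≤ (1 + δ) * α^2 / 2 - δ := by
    have h := hβ.2
    have heq : ((1 + 3*δ) * α) * ((1 + δ)/(1 + 3*δ) * (α/2) - δ/((1 + 3*δ) * α)) =
        (1 + δ) * α^2 / 2 - δ := by
      field_simp
    have h2 := mul_le_mul_of_nonneg_left h (le_of_lt (by positivity : (0:ℝ) < (1 + 3*δ) * α))
    rw [heq] at h2
    linarith [h2]
  have hc : (m : ℝ) * ((1 + 3*δ) * β * n * p) ≤ (1 + δ) * (m : ℝ)^2 * p / 2 - δ * n^2 * p := by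
    have h2 := mul_le_mul_of_nonneg_right hq (by positivity : (0:ℝ) ≤ (n:ℝ)^2 * p)
    have hmn2 : (m : ℝ) = α * n := hm
    calc (m : ℝ) * ((1 + 3*δ) * β * n * p) = ((1 + 3*δ) * β * α) * ((n:ℝ)^2 * p) := by
          rw [hmn2]; ring
      _ ≤ ((1 + δ) * α^2 / 2 - δ) * ((n:ℝ)^2 * p) := h2
      _ = (1 + δ) * (α * n)^2 * p / 2 - δ * n^2 * p := by ring
      _ = (1 + δ) * (m : ℝ)^2 * p / 2 - δ * n^2 * p := by rw [hmn2]
  -- final contradiction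
  have key : (1 + δ) * (m : ℝ)^2 * p / 2 - δ * n^2 * p
      + (1 + δ) * (((n : ℝ) - m)^2 / 2) * p + (1 + δ) * (m : ℝ) * ((n : ℝ) - m) * p
      = (1 - δ) * (n : ℝ)^2 * p / 2 := by ring
  linarith
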